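/- Fix an integer m ≥ 2. Every n ∈ ℕ admits exactly one representation n = Σ_{j=0}^{L} ε_j F_j^{(m)} with L ∈ ℕ and digits ε_j ∈ {0,1} such that no m consecutive digits ε_{j+m−1}, ε_{j+m−2}, …, ε_j are all equal to 1 (uniqueness up to appending leading zero digits). -/

import Mathlib

open MeasureTheory Filter Set

namespace Mbon

/-- The `m`-bonacci sequence `F m`. -/
noncomputable def F (m : ℕ) : ℕ → ℕ := fun k =>
  Nat.strongRecOn k fun k ih =>
    if h : k < m then 2 ^ k
    else ∑ j ∈ (Finset.range m).attach,
      ih (k - (j : ℕ) - 1) (by have := Finset.mem_range.mp j.2; omega)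

/-- `ε : ℕ → ℕ` is the (unique) greedy digit string of `n` in the `m`-bonacci
numeration system: digits in `{0,1}`, finitely many nonzero digits, no `m`
consecutive digits all equal to `1`, and the digits represent `n`. -/
def IsGreedy (m n : ℕ) (ε : ℕ → ℕ) : Prop :=
  (∀ j, ε j ≤ 1) ∧
  (∀ j, ¬ (∀ i, i < m → ε (j + i) = 1)) ∧
  (∃ J, (∀ j, J ≤ j → ε j = 0) ∧ n = ∑ j ∈ Finset.range J, ε j * F m j)

/-- digits indexed by `ℤ`, with the convention `ε_j = 0` for `j < 0`. -/
def digZ (ε : ℕ → ℕ) (j : ℤ) : ℕ := if 0 ≤ j then ε j.toNat else 0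

/-- `r` is such that `ε_{k-1} = ⋯ = ε_{k-r} = 1` and `ε_{k-r-1} = 0`. -/
def RunLen (m : ℕ) (ε : ℕ → ℕ) (k r : ℕ) : Prop :=
  r < m ∧ (∀ i : ℕ, 1 ≤ i → i ≤ r → digZ ε ((k : ℤ) - i) = 1) ∧
    digZ ε ((k : ℤ) - r - 1) = 0

/-- `φ` is the `m`-bonacci number: the real root `> 1` of `x^m = x^{m-1}+⋯+x+1`. -/
def IsPhi (m : ℕ) (φ : ℝ) : Prop := 1 < φ ∧ φ ^ m = ∑ i ∈ Finset.range m, φ ^ i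

/-- the `φ`-adic van der Corput value `V_φ(n) = Σ_j ε_j(n) φ^{-j-1}`. -/
noncomputable def VdC (φ : ℝ) (ε : ℕ → ℕ) : ℝ := ∑' j : ℕ, (ε j : ℝ) * φ ^ (-(j : ℤ) - 1)

/-- `μ_k = Σ_{j=0}^{k-1} ε_{k-1-j} φ^j`. -/
noncomputable def muk (φ : ℝ) (ε : ℕ → ℕ) (k : ℕ) : ℝ :=
  ∑ j ∈ Finset.range k, (ε (k - 1 - j) : ℝ) * φ ^ j

/-- `ν_k = Σ_{j=0}^{k-1} ε_j F_j^{(m)}`. -/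
noncomputable def nuk (m : ℕ) (ε : ℕ → ℕ) (k : ℕ) : ℕ := ∑ j ∈ Finset.range k, ε j * F m j

/-- The substitution `σ_m` on the alphabet `Fin m` (`0`-based; the letter `i+1`
of the paper corresponds to `i : Fin m`): `σ(i) = 1(i+1)` for `i < m`, `σ(m) = 1`. -/
def sub {m : ℕ} (i : Fin m) : List (Fin m) :=
  if h : (i : ℕ) + 1 < m then [⟨0, i.pos⟩, ⟨(i : ℕ) + 1, h⟩] else [⟨0, i.pos⟩]

/-- extension of `σ_m` to words. -/
def subw {m : ℕ} (w : List (Fin m)) : List (Fin m) := w.flatMap sub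

/-- `σ_m^k(1)`, a prefix of the infinite fixed point of `σ_m`. -/
def fixWord (m : ℕ) (k : ℕ) : List (Fin m) :=
  subw^[k] (if h : 0 < m then [⟨0, h⟩] else [])

/-- abelianization `l(w)` of a word, as a vector in `ℝ^m`. -/
noncomputable def ab {m : ℕ} (w : List (Fin m)) : Fin m → ℝ := fun i => (w.count i : ℝ)

/-- The incidence matrix `B_m` of `σ_m`; its `(i,j)` entry is `|σ_m(j)|_i`. -/
noncomputable def B (m : ℕ) : Matrix (Fin m) (Fin m) ℝ :=
  Matrix.of fun i j => ((sub j).count i : ℝ)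

/-- `u` is a right eigenvector of `B_m` for the eigenvalue `φ`. -/
def IsRightEv (m : ℕ) (φ : ℝ) (u : Fin m → ℝ) : Prop := u ≠ 0 ∧ (B m).mulVec u = φ • u

/-- `v` is a left eigenvector of `B_m` for the eigenvalue `φ`. -/
def IsLeftEv (m : ℕ) (φ : ℝ) (v : Fin m → ℝ) : Prop := v ≠ 0 ∧ (B m).vecMul v = φ • v

/-- the projection `π_c` onto `v^⊥` along `u`. -/
noncomputable def proj {m : ℕ} (u v : Fin m → ℝ) (x : Fin m → ℝ) : Fin m → ℝ :=
  x - ((∑ i, v i * x i) / (∑ i, v i * u i)) • u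

/-- the hyperplane `v^⊥ = {x : ⟨v,x⟩ = 0}`. -/
def vperp {m : ℕ} (v : Fin m → ℝ) : Set (Fin m → ℝ) := {x | ∑ i, v i * x i = 0}

/-- standard basis vector `e_{i+1}` of `ℝ^m`. -/
def stdb {m : ℕ} (i : Fin m) : Fin m → ℝ := Pi.single i 1

/-- the first standard basis vector `e_1` of `ℝ^m`. -/
def e1 (m : ℕ) : Fin m → ℝ := fun j => if (j : ℕ) = 0 then 1 else 0

/-- the lattice `L_m = ⟨π_c(e_1-e_2),…,π_c(e_1-e_m)⟩_ℤ`. -/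
def latt {m : ℕ} (u v : Fin m → ℝ) : AddSubgroup (Fin m → ℝ) :=
  AddSubgroup.closure {x | ∃ i : Fin m, (i : ℕ) ≠ 0 ∧ x = proj u v (e1 m - stdb i)}

/-- a fundamental mesh of the lattice `L_m`. -/
def mesh {m : ℕ} (u v : Fin m → ℝ) : Set (Fin m → ℝ) :=
  {x | ∃ t : Fin m → ℝ, (∀ i, 0 ≤ t i ∧ t i < 1) ∧
    x = ∑ i ∈ Finset.univ.filter (fun i : Fin m => (i : ℕ) ≠ 0),
      t i • proj u v (e1 m - stdb i)}

/-- the Lebesgue measure `λ_v` on `v^⊥`, normalized so that a fundamental mesh of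
`L_m` has measure `1` (realized as normalized `(m-1)`-dimensional Hausdorff measure). -/
noncomputable def lamv (m : ℕ) (u v : Fin m → ℝ) : Measure (Fin m → ℝ) :=
  (μH[(m : ℝ) - 1] (mesh u v))⁻¹ • μH[(m : ℝ) - 1]

/-- the subtile `R_m(i)` of the Rauzy fractal. -/
noncomputable def Rtile {m : ℕ} (u v : Fin m → ℝ) (i : Fin m) : Set (Fin m → ℝ) :=
  closure {x | ∃ (k : ℕ) (p s : List (Fin m)),
    fixWord m k = p ++ i :: s ∧ x = proj u v (ab p)}

/-- the Rauzy fractal `R_m` of `σ_m`. -/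
noncomputable def Rfrac {m : ℕ} (u v : Fin m → ℝ) : Set (Fin m → ℝ) :=
  closure {x | ∃ (k : ℕ) (p s : List (Fin m)),
    fixWord m k = p ++ s ∧ x = proj u v (ab p)}

/-- interior of `A` relative to the subspace `V`. -/
def relInterior {X : Type*} [TopologicalSpace X] (V A : Set X) : Set X :=
  Subtype.val '' interior (Subtype.val ⁻¹' A : Set V)

/-- boundary of `A` relative to the subspace `V`. -/
def relFrontier {X : Type*} [TopologicalSpace X] (V A : Set X) : Set X :=
  Subtype.val '' frontier (Subtype.val ⁻¹' A : Set V)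

/-- minimal number of sets of diameter `≤ δ` needed to cover `A`. -/
noncomputable def coverNum {X : Type*} [PseudoMetricSpace X] (A : Set X) (δ : ℝ) : ℕ :=
  sInf {n : ℕ | ∃ f : Fin n → Set X, (∀ i, Metric.diam (f i) ≤ δ) ∧ A ⊆ ⋃ i, f i}

/-- the (upper) box counting dimension. -/
noncomputable def dimB {X : Type*} [PseudoMetricSpace X] (A : Set X) : ℝ :=
  Filter.limsup (fun δ : ℝ => Real.log (coverNum A δ) / Real.log (1 / δ))
    (nhdsWithin 0 (Set.Ioi 0))

/-- the one-dimensional star discrepancy `D_N`. -/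
noncomputable def starDisc1 (y : ℕ → ℝ) (N : ℕ) : ℝ :=
  sSup {d : ℝ | ∃ ω : ℝ, 0 < ω ∧ ω ≤ 1 ∧
    d = |(∑ n ∈ Finset.range N,
        Set.indicator (Set.Ico 0 ω) (fun _ => (1 : ℝ)) (y n)) / N - ω|}

/-- the `s`-dimensional star discrepancy `D_N`. -/
noncomputable def starDisc {s : ℕ} (y : ℕ → Fin s → ℝ) (N : ℕ) : ℝ :=
  sSup {d : ℝ | ∃ ω : Fin s → ℝ, (∀ i, 0 < ω i ∧ ω i ≤ 1) ∧
    d = |(∑ n ∈ Finset.range N,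
        Set.indicator (Set.univ.pi fun i => Set.Ico (0 : ℝ) (ω i)) (fun _ => (1 : ℝ)) (y n)) / N -
      ∏ i, ω i|}

/-- `i_0 →^{p_0} i_1 →^{p_1} ⋯ →^{p_{k-1}} i_k` is a walk of length `k` in the
prefix-suffix graph `G_{σ_m}`: for each step there is an edge from `i_t` to
`i_{t+1}` labelled `(p_t, i_t, s_t)`, i.e. `σ_m(i_{t+1}) = p_t i_t s_t`. -/
def IsWalk {m : ℕ} (k : ℕ) (i : Fin (k + 1) → Fin m) (p : Fin k → List (Fin m)) : Prop :=
  ∀ t : Fin k, ∃ s : List (Fin m), sub (i t.succ) = p t ++ i t.castSucc :: s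

/-- the collection `S_k^{(m)}` of level-`k` subtiles
`B_m^k R_m(i_k) + π_c l(σ_m^{k-1}(p_{k-1})⋯σ_m(p_1)p_0)` of the Rauzy fractal. -/
noncomputable def levelTiles (m k : ℕ) (u v : Fin m → ℝ) : Set (Set (Fin m → ℝ)) :=
  {S | ∃ (i : Fin (k + 1) → Fin m) (p : Fin k → List (Fin m)), IsWalk k i p ∧
    S = (fun x => (B m ^ k).mulVec x +
          ∑ t : Fin k, proj u v (ab (subw^[(t : ℕ)] (p t)))) '' Rtile u v (i (Fin.last k))}

/-- the saturation `S + L_m` of a set `S` by the lattice `L_m`. -/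
def satur {m : ℕ} (u v : Fin m → ℝ) (S : Set (Fin m → ℝ)) : Set (Fin m → ℝ) :=
  {x | ∃ y ∈ S, ∃ l ∈ latt u v, x = y + l}



section AuxProofs

variable {m : ℕ}

lemma F_def' (m k : ℕ) :
    F m k = if k < m then 2^k else ∑ j ∈ Finset.range m, F m (k - j - 1) := by
  unfold F
  rw [Nat.strongRecOn_eq]
  split
  · rfl
  · exact Finset.sum_attach (Finset.range m) (fun j => F m (k - j - 1))

lemma F_lt_m {k : ℕ} (h : k < m) : F m k = 2 ^ k := by
  rw [F_def']; simp [h]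

lemma F_rec {k : ℕ} (h : m ≤ k) : F m k = ∑ j ∈ Finset.range m, F m (k - j - 1) := by
  rw [F_def']; simp [Nat.not_lt.2 h]

lemma F_rec' {k : ℕ} (h : m ≤ k) : F m k = ∑ j ∈ Finset.Ico (k - m) k, F m j := by
  rw [F_rec h, Finset.sum_Ico_eq_sum_range]
  have h1 : k - (k - m) = m := by omega
  rw [h1]
  have h2 : ∀ j ∈ Finset.range m, F m (k - j - 1) = (fun t => F m (k - m + t)) (m - 1 - j) := by
    intro j hj
    have := Finset.mem_range.mp hj
    simp only []
    congr 1
    omega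
  rw [Finset.sum_congr rfl h2]
  exact Finset.sum_range_reflect (fun t => F m (k - m + t)) m

lemma F_pos (hm : 1 ≤ m) (k : ℕ) : 0 < F m k := by
  induction k using Nat.strong_induction_on with
  | _ k ih =>
    rcases lt_or_ge k m with h | h
    · rw [F_lt_m h]; positivity
    · rw [F_rec h]
      have h0 : (0:ℕ) ∈ Finset.range m := Finset.mem_range.2 hm
      calc 0 < F m (k - 0 - 1) := ih _ (by omega)
        _ ≤ _ := Finset.single_le_sum (f := fun j => F m (k - j - 1))
            (fun _ _ => Nat.zero_le _) h0

lemma F_succ_lt (hm : 2 ≤ m) (k : ℕ) : F m k < F m (k+1) := by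
  rcases lt_or_ge (k+1) m with h | h
  · rw [F_lt_m (by omega), F_lt_m h, pow_succ]
    have h1 : 0 < (2:ℕ)^k := by positivity
    omega
  · rw [F_rec' (k := k+1) h]
    have hk1 : 1 ≤ k := by omega
    have hIco : Finset.Ico (k-1) (k+1) = {k-1, k} := by
      ext x; simp only [Finset.mem_Ico, Finset.mem_insert, Finset.mem_singleton]; omega
    have hsub : Finset.Ico (k-1) (k+1) ⊆ Finset.Ico (k+1-m) (k+1) :=
      Finset.Ico_subset_Ico (by omega) le_rfl
    calc F m k < F m (k-1) + F m k := by have := F_pos (show 1 ≤ m by omega) (k-1); omega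
      _ = ∑ j ∈ Finset.Ico (k-1) (k+1), F m j := by
          rw [hIco, Finset.sum_pair (by omega : k - 1 ≠ k)]
      _ ≤ _ := Finset.sum_le_sum_of_subset hsub

lemma F_mono (hm : 2 ≤ m) : StrictMono (F m) :=
  strictMono_nat_of_lt_succ (F_succ_lt hm)

lemma le_F (hm : 2 ≤ m) (k : ℕ) : k + 1 ≤ F m k := by
  induction k with
  | zero => rw [F_lt_m (by omega)]; norm_num
  | succ n ihn => have := F_succ_lt hm n; omega

lemma geom (k : ℕ) : (∑ j ∈ Finset.range k, 2^j) + 1 = 2^k := by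
  induction k with
  | zero => simp
  | succ n ih => rw [Finset.sum_range_succ, pow_succ]; omega

lemma sum_consec (hm : 2 ≤ m) {s k : ℕ} (hs : s ≤ m) (hsk : s ≤ k) :
    ∑ j ∈ Finset.Ico (k - s) k, F m j ≤ F m k := by
  rcases lt_or_ge k m with h | h
  · have h1 : ∀ j ∈ Finset.Ico (k-s) k, F m j = 2^j := by
      intro j hj
      exact F_lt_m (by have := (Finset.mem_Ico.mp hj).2; omega)
    calc ∑ j ∈ Finset.Ico (k-s) k, F m j = ∑ j ∈ Finset.Ico (k-s) k, 2^j :=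
          Finset.sum_congr rfl h1
      _ ≤ ∑ j ∈ Finset.range k, 2^j := by
          apply Finset.sum_le_sum_of_subset
          intro x hx
          simp only [Finset.mem_Ico] at hx
          exact Finset.mem_range.mpr hx.2
      _ ≤ F m k := by rw [F_lt_m h]; have := geom k; omega
  · rw [F_rec' h]
    exact Finset.sum_le_sum_of_subset (Finset.Ico_subset_Ico (by omega) le_rfl)

lemma F_succ_le (hm : 2 ≤ m) (k : ℕ) : F m (k+1) ≤ 2 * F m k := by
  rcases lt_or_ge (k+1) m with h | h
  · rw [F_lt_m h, F_lt_m (by omega), pow_succ]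
    omega
  · rw [F_rec' (show m ≤ k+1 from h), Finset.sum_Ico_succ_top (by omega)]
    have h2 : ∑ j ∈ Finset.Ico (k+1-m) k, F m j ≤ F m k := by
      rw [show k+1-m = k - (m-1) by omega]
      exact sum_consec hm (by omega) (by omega)
    omega

lemma nuk_lt (hm : 2 ≤ m) {ε : ℕ → ℕ} (hd : ∀ j, ε j ≤ 1)
    (hr : ∀ j, ¬ (∀ i, i < m → ε (j + i) = 1)) (k : ℕ) :
    ∑ j ∈ Finset.range k, ε j * F m j < F m k := by
  induction k using Nat.strong_induction_on with
  | _ k ih =>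
  rcases Nat.eq_zero_or_pos k with rfl | hk
  · simp [F_lt_m (show 0 < m by omega)]
  have hex : ∃ i, k ≤ i ∨ ε (k - 1 - i) = 0 := ⟨k, Or.inl le_rfl⟩
  set r := Nat.find hex with hrdef
  have hrk : r ≤ k := Nat.find_min' hex (Or.inl le_rfl)
  have hones : ∀ i, i < r → ε (k - 1 - i) = 1 := by
    intro i hi
    have h1 := Nat.find_min hex hi
    push_neg at h1
    have := hd (k - 1 - i)
    omega
  have hrm : r < m := by
    by_contra hcon
    push_neg at hcon
    apply hr (k - m)
    intro i hi
    have h1 : k - m + i = k - 1 - (m - 1 - i) := by omega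
    rw [h1]
    exact hones _ (by omega)
  rcases eq_or_lt_of_le hrk with hrk' | hrk'
  · have hkm : k < m := by omega
    calc ∑ j ∈ Finset.range k, ε j * F m j ≤ ∑ j ∈ Finset.range k, 2^j := by
          apply Finset.sum_le_sum
          intro j hj
          have hjk : j < k := Finset.mem_range.mp hj
          rw [F_lt_m (by omega)]
          calc ε j * 2^j ≤ 1 * 2^j := Nat.mul_le_mul_right _ (hd j)
            _ = 2^j := one_mul _
      _ < 2^k := by have := geom k; omega
      _ = F m k := (F_lt_m hkm).symm
  · have hz : ε (k - 1 - r) = 0 := by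
      rcases Nat.find_spec hex with h | h
      · omega
      · exact h
    have hsplit : ∑ j ∈ Finset.range (k - r), ε j * F m j
        + ∑ j ∈ Finset.Ico (k - r) k, ε j * F m j = ∑ j ∈ Finset.range k, ε j * F m j :=
      Finset.sum_range_add_sum_Ico _ (by omega)
    have htop : ∑ j ∈ Finset.Ico (k - r) k, ε j * F m j
        = ∑ j ∈ Finset.Ico (k - r) k, F m j := by
      apply Finset.sum_congr rfl
      intro j hj
      obtain ⟨h1, h2⟩ := Finset.mem_Ico.mp hj
      have h4 := hones (k - 1 - j) (by omega)
      rw [show k - 1 - (k - 1 - j) = j by omega] at h4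
      rw [h4, one_mul]
    have hbot : ∑ j ∈ Finset.range (k - r), ε j * F m j
        = ∑ j ∈ Finset.range (k - r - 1), ε j * F m j := by
      rw [show k - r = (k - r - 1) + 1 by omega, Finset.sum_range_succ,
        show k - r - 1 = k - 1 - r by omega, hz]
      simp
    have hIH := ih (k - r - 1) (by omega)
    have hfin : F m (k - r - 1) + ∑ j ∈ Finset.Ico (k - r) k, F m j ≤ F m k := by
      have h1 : ∑ j ∈ Finset.Ico (k - r - 1) k, F m j
          = F m (k - r - 1) + ∑ j ∈ Finset.Ico (k - r) k, F m j := by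
        rw [Finset.sum_eq_sum_Ico_succ_bot (by omega : k - r - 1 < k),
          show k - r - 1 + 1 = k - r by omega]
      have h2 := sum_consec hm (show r+1 ≤ m by omega) (show r+1 ≤ k by omega)
      rw [show k - (r+1) = k - r - 1 by omega] at h2
      omega
    omega

lemma exists_greedy (hm : 2 ≤ m) (n : ℕ) : ∃ ε, IsGreedy m n ε := by
  induction n using Nat.strong_induction_on with
  | _ n ih =>
  rcases Nat.eq_zero_or_pos n with rfl | hn
  · refine ⟨fun _ => 0, fun _ => Nat.zero_le _, ?_, 0, fun _ _ => rfl, by simp⟩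
    intro j h
    have := h 0 (by omega)
    simp at this
  · set k := Nat.findGreatest (fun j => F m j ≤ n) n with hkdef
    have hP0 : F m 0 ≤ n := by rw [F_lt_m (by omega), pow_zero]; omega
    have hk : F m k ≤ n :=
      Nat.findGreatest_spec (P := fun j => F m j ≤ n) (Nat.zero_le n) hP0
    have hk1 : n < F m (k+1) := by
      rcases le_or_gt (k+1) n with h | h
      · by_contra hcon
        push_neg at hcon
        exact Nat.findGreatest_is_greatest (P := fun j => F m j ≤ n)
          (Nat.lt_succ_self k) h hcon
      · have := le_F hm (k+1)
        omega
    obtain ⟨ε', hd', hr', J', hJ', hsum'⟩ := ih (n - F m k) (by have := F_pos (show 1 ≤ m by omega) k; omega)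
    have hn'k : n - F m k < F m k := by have := F_succ_le hm k; omega
    have h0 : ∀ t, k ≤ t → ε' t = 0 := by
      intro t ht
      by_contra hcon
      have h1 : ε' t = 1 := by have := hd' t; omega
      have h2 : t < J' := by
        by_contra h3
        push_neg at h3
        rw [hJ' t h3] at h1
        omega
      have h3 : F m t ≤ n - F m k := by
        calc F m t = ε' t * F m t := by rw [h1, one_mul]
          _ ≤ ∑ j ∈ Finset.range J', ε' j * F m j :=
              Finset.single_le_sum (f := fun j => ε' j * F m j)
                (fun _ _ => Nat.zero_le _) (Finset.mem_range.mpr h2)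
          _ = n - F m k := hsum'.symm
      have h4 : F m k ≤ F m t := (F_mono hm).monotone ht
      omega
    refine ⟨fun j => if j = k then 1 else ε' j, ?_, ?_, max J' (k+1), ?_, ?_⟩
    · intro j
      by_cases h : j = k <;> simp [h, hd' j]
    · intro j hcon
      replace hcon : ∀ i, i < m → (if j + i = k then 1 else ε' (j + i)) = 1 := hcon
      rcases lt_trichotomy (j + m - 1) k with hc | hc | hc
      · apply hr' j
        intro i hi
        have h1 := hcon i hi
        rwa [if_neg (by omega)] at h1
      · have hsub : Finset.Ico j (j + m - 1) ⊆ Finset.range J' := by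
          intro t ht
          obtain ⟨h1, h2⟩ := Finset.mem_Ico.mp ht
          have h3 := hcon (t - j) (by omega)
          rw [show j + (t - j) = t by omega, if_neg (by omega)] at h3
          refine Finset.mem_range.mpr ?_
          by_contra h4
          push_neg at h4
          rw [hJ' t h4] at h3
          omega
        have h5 : ∑ t ∈ Finset.Ico j (j + m - 1), F m t ≤ n - F m k := by
          calc ∑ t ∈ Finset.Ico j (j + m - 1), F m t
              = ∑ t ∈ Finset.Ico j (j + m - 1), ε' t * F m t := by
                apply Finset.sum_congr rfl
                intro t ht
                obtain ⟨h1, h2⟩ := Finset.mem_Ico.mp ht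
                have h3 := hcon (t - j) (by omega)
                rw [show j + (t - j) = t by omega, if_neg (by omega)] at h3
                rw [h3, one_mul]
            _ ≤ ∑ t ∈ Finset.range J', ε' t * F m t := Finset.sum_le_sum_of_subset hsub
            _ = n - F m k := hsum'.symm
        have h6 : F m (k+1) = ∑ t ∈ Finset.Ico j (j+m), F m t := by
          rw [show k+1 = j+m by omega, F_rec' (by omega : m ≤ j+m),
            show j+m-m = j by omega]
        have h7 : ∑ t ∈ Finset.Ico j (j+m), F m t
            = ∑ t ∈ Finset.Ico j (j+m-1), F m t + F m (j+m-1) := by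
          have h8 := Finset.sum_Ico_succ_top (by omega : j ≤ j + m - 1) (fun t => F m t)
          rw [show j + m - 1 + 1 = j + m by omega] at h8
          exact h8
        have h8 : F m (j + m - 1) = F m k := by rw [hc]
        omega
      · have h1 := hcon (m-1) (by omega)
        rw [show j + (m-1) = j+m-1 by omega, if_neg (by omega)] at h1
        have := h0 (j+m-1) (by omega)
        omega
    · intro t ht
      have hb1 := le_max_left J' (k+1)
      have hb2 := le_max_right J' (k+1)
      show (if t = k then 1 else ε' t) = 0
      rw [if_neg (by omega)]
      exact hJ' t (by omega)
    · have hb2 := le_max_right J' (k+1)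
      show n = ∑ j ∈ Finset.range (max J' (k+1)), (if j = k then 1 else ε' j) * F m j
      have h1 : ∑ j ∈ Finset.range (max J' (k+1)), ε' j * F m j = n - F m k := by
        rw [← Finset.sum_subset (Finset.range_subset_range.mpr (le_max_left J' (k+1)))
          (fun x _ hnx => by
            rw [hJ' x (by simpa using hnx), zero_mul])]
        exact hsum'.symm
      have h3 : ∀ j ∈ Finset.range (max J' (k+1)), (if j = k then 1 else ε' j) * F m j
          = ε' j * F m j + (if j = k then F m j else 0) := by
        intro j _
        by_cases h : j = k
        · rw [if_pos h, if_pos h, one_mul, show ε' j = 0 from h0 j (by omega), zero_mul,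
            zero_add]
        · rw [if_neg h, if_neg h, add_zero]
      rw [Finset.sum_congr rfl h3, Finset.sum_add_distrib,
        Finset.sum_ite_eq' (Finset.range (max J' (k+1))) k (fun j => F m j),
        if_pos (Finset.mem_range.mpr (by omega)), h1]
      omega

lemma greedy_zero (hm : 2 ≤ m) {ε : ℕ → ℕ} (hg : IsGreedy m 0 ε) : ∀ j, ε j = 0 := by
  obtain ⟨hd, hr, J, hJ, hsum⟩ := hg
  intro j
  rcases le_or_gt J j with h | h
  · exact hJ j h
  · have h1 : ε j * F m j ≤ 0 := by
      calc ε j * F m j ≤ ∑ t ∈ Finset.range J, ε t * F m t :=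
            Finset.single_le_sum (f := fun t => ε t * F m t)
              (fun _ _ => Nat.zero_le _) (Finset.mem_range.mpr h)
        _ = 0 := hsum.symm
    have h2 : 0 < F m j := F_pos (show 1 ≤ m by omega) j
    rcases Nat.mul_eq_zero.mp (Nat.le_zero.mp h1) with h3 | h3
    · exact h3
    · omega

lemma top_digit (hm : 2 ≤ m) {n : ℕ} {ε : ℕ → ℕ} (hg : IsGreedy m n ε) (hn : 0 < n) :
    ∃ k, ε k = 1 ∧ (∀ j, k < j → ε j = 0) ∧ F m k ≤ n ∧ n < F m (k+1) := by
  obtain ⟨hd, hr, J, hJ, hsum⟩ := hg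
  have hex : ∃ j, ε j ≠ 0 := by
    by_contra hcon
    push_neg at hcon
    have h1 : n = 0 := by
      rw [hsum]
      apply Finset.sum_eq_zero
      intro j _
      rw [hcon j, zero_mul]
    omega
  obtain ⟨j0, hj0⟩ := hex
  have hj0J : j0 < J := by
    by_contra h
    push_neg at h
    exact hj0 (hJ j0 h)
  set k := Nat.findGreatest (fun j => ε j ≠ 0) J with hkdef
  have hk1 : ε k ≠ 0 :=
    Nat.findGreatest_spec (P := fun j => ε j ≠ 0) (le_of_lt hj0J) hj0
  have hke : ε k = 1 := by have := hd k; omega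
  have htop : ∀ j, k < j → ε j = 0 := by
    intro j hj
    rcases le_or_gt J j with h | h
    · exact hJ j h
    · by_contra hc
      exact Nat.findGreatest_is_greatest (P := fun j => ε j ≠ 0) hj (le_of_lt h) hc
  have hkJ : k < J := by
    by_contra h
    push_neg at h
    have := hJ k h
    omega
  refine ⟨k, hke, htop, ?_, ?_⟩
  · calc F m k = ε k * F m k := by rw [hke, one_mul]
      _ ≤ ∑ j ∈ Finset.range J, ε j * F m j :=
          Finset.single_le_sum (f := fun j => ε j * F m j)
            (fun _ _ => Nat.zero_le _) (Finset.mem_range.mpr hkJ)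
      _ = n := hsum.symm
  · have h1 : n = ∑ j ∈ Finset.range (k+1), ε j * F m j := by
      rw [hsum]
      refine (Finset.sum_subset (Finset.range_subset_range.mpr (by omega : k+1 ≤ J)) ?_).symm
      intro x hx hnx
      rw [htop x (by simpa using hnx), zero_mul]
    rw [h1]
    exact nuk_lt hm hd hr (k+1)

lemma greedy_unique (hm : 2 ≤ m) (n : ℕ) : ∀ ε ε' : ℕ → ℕ,
    IsGreedy m n ε → IsGreedy m n ε' → ε = ε' := by
  induction n using Nat.strong_induction_on with
  | _ n ih =>
  intro ε ε' hg hg'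
  rcases Nat.eq_zero_or_pos n with rfl | hn
  · funext j
    rw [greedy_zero hm hg j, greedy_zero hm hg' j]
  obtain ⟨k, hk1, hktop, hkle, hklt⟩ := top_digit hm hg hn
  obtain ⟨k', hk1', hktop', hkle', hklt'⟩ := top_digit hm hg' hn
  have hkk : k = k' := by
    by_contra h
    rcases lt_or_gt_of_ne h with h | h
    · have := (F_mono hm).monotone (show k+1 ≤ k' by omega); omega
    · have := (F_mono hm).monotone (show k'+1 ≤ k by omega); omega
  subst hkk
  have key : ∀ δ : ℕ → ℕ, IsGreedy m n δ → δ k = 1 →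
      IsGreedy m (n - F m k) (fun j => if j = k then 0 else δ j) := by
    intro δ hgd hδk
    obtain ⟨hd, hr, J, hJ, hsum⟩ := hgd
    refine ⟨?_, ?_, J, ?_, ?_⟩
    · intro j
      by_cases h : j = k <;> simp [h, hd j]
    · intro j hcon
      replace hcon : ∀ i, i < m → (if j + i = k then 0 else δ (j + i)) = 1 := hcon
      apply hr j
      intro i hi
      have h1 := hcon i hi
      by_cases h : j + i = k
      · rw [if_pos h] at h1; omega
      · rwa [if_neg h] at h1
    · intro j hj
      by_cases h : j = k <;> simp [h, hJ j hj]
    · have hkJ : k < J := by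
        by_contra h
        push_neg at h
        have := hJ k h
        omega
      show n - F m k = ∑ j ∈ Finset.range J, (if j = k then 0 else δ j) * F m j
      have h3 : ∀ j ∈ Finset.range J, δ j * F m j
          = (if j = k then 0 else δ j) * F m j + (if j = k then F m j else 0) := by
        intro j _
        by_cases h : j = k
        · rw [if_pos h, if_pos h, show δ j = 1 by rw [h]; exact hδk, one_mul, zero_mul,
            zero_add]
        · rw [if_neg h, if_neg h, add_zero]
      have h4 : n = ∑ j ∈ Finset.range J, (if j = k then 0 else δ j) * F m j + F m k := by
        rw [hsum, Finset.sum_congr rfl h3, Finset.sum_add_distrib,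
          Finset.sum_ite_eq' _ k (fun j => F m j), if_pos (Finset.mem_range.mpr hkJ)]
      omega
  have hred := key ε hg hk1
  have hred' := key ε' hg' hk1'
  have hlt : n - F m k < n := by have := F_pos (show 1 ≤ m by omega) k; omega
  have heq := ih (n - F m k) hlt _ _ hred hred'
  funext j
  by_cases h : j = k
  · rw [h, hk1, hk1']
  · have := congrFun heq j
    simpa [if_neg h] using this

end AuxProofs

/-- every `n ∈ ℕ` admits exactly one expansion `n = Σ_j ε_j F_j^{(m)}`
with digits in `{0,1}`, finitely many nonzero, and no `m` consecutive digits equal to `1`. -/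
theorem stmt16 (m : ℕ) (hm : 2 ≤ m) (n : ℕ) :
    ∃ ε : ℕ → ℕ, IsGreedy m n ε ∧ ∀ ε' : ℕ → ℕ, IsGreedy m n ε' → ε' = ε := by
  obtain ⟨ε, hε⟩ := exists_greedy hm n
  exact ⟨ε, hε, fun ε' hε' => greedy_unique hm n ε' ε hε' hε⟩

end Mbon
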